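/- There is no function f from complete state-only datasets to value functions that recovers the optimal value function of every finite MDP: there exist two finite MDPs M₁ and M₂ (over the same state set) with identical complete state-only datasets D_{M₁} = D_{M₂} but different optimal value functions V*_{M₁} ≠ V*_{M₂}. -/

import Mathlib

/-- `p` is a valid joint transition/reward probability kernel for a finite MDP. -/
def IsKernel {S A Rw : Type*} [Fintype S] [Fintype A] [Fintype Rw]
    (p : S → A → S → Rw → ℝ) : Prop :=
  (∀ s a s' r, 0 ≤ p s a s' r) ∧ ∀ s a, ∑ s' : S, ∑ r : Rw, p s a s' r = 1

/-- `V` satisfies the Bellman optimality equation (characterizing `V*` for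
`0 ≤ γ < 1`). -/
def IsOptimalValue {S A Rw : Type*} [Fintype S] [Fintype A] [Nonempty A] [Fintype Rw]
    (p : S → A → S → Rw → ℝ) (rv : Rw → ℝ) (γ : ℝ) (V : S → ℝ) : Prop :=
  ∀ s : S, V s = Finset.univ.sup' Finset.univ_nonempty
    (fun a : A => ∑ s' : S, ∑ r : Rw, p s a s' r * (rv r + γ * V s'))

/-- The complete state-only dataset of an MDP: all triples `(s, s', r)` that occur
with positive probability under some action. -/
def Dataset {S A Rw : Type*} (p : S → A → S → Rw → ℝ) : S → S → Rw → Prop :=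
  fun s s' r => ∃ a : A, 0 < p s a s' r


noncomputable def P₁ : Fin 3 → Fin 2 → Fin 3 → Fin 2 → ℝ := fun s a s' r =>
  if s.val = 2 then (if s'.val = 2 ∧ r.val = 0 then 1 else 0)
  else if s.val = 1 then (if s'.val = 2 ∧ r.val = 1 then 1 else 0)
  else if a.val = 0 then (if s'.val = 1 ∧ r.val = 0 then 1 else 0)
  else (if s'.val = 2 ∧ r.val = 1 then 1 else 0)

noncomputable def P₂ : Fin 3 → Fin 2 → Fin 3 → Fin 2 → ℝ := fun s a s' r =>
  if s.val = 2 then (if s'.val = 2 ∧ r.val = 0 then 1 else 0)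
  else if s.val = 1 then (if s'.val = 2 ∧ r.val = 1 then 1 else 0)
  else if a.val = 0 then (if s'.val = 1 ∧ r.val = 0 then 1 else 0)
  else (if s'.val = 1 ∧ r.val = 0 then 0.9 else if s'.val = 2 ∧ r.val = 1 then 0.1 else 0)

lemma kernel1 : IsKernel P₁ := by
  constructor
  · intro s a s' r
    unfold P₁; split_ifs <;> norm_num
  · intro s a
    fin_cases s <;> fin_cases a <;>
      norm_num [Fin.sum_univ_three, Fin.sum_univ_two, P₁] <;> decide

lemma kernel2 : IsKernel P₂ := by
  constructor
  · intro s a s' r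
    unfold P₂; split_ifs <;> norm_num
  · intro s a
    fin_cases s <;> fin_cases a <;>
      norm_num [Fin.sum_univ_three, Fin.sum_univ_two, P₂] <;> decide

lemma dataEq : Dataset P₁ = Dataset P₂ := by
  funext s s' r
  apply propext
  fin_cases s <;> fin_cases s' <;> fin_cases r <;>
    simp [Dataset, P₁, P₂, Fin.exists_fin_two] <;> norm_num

lemma sup2 (g : Fin 2 → ℝ) :
    Finset.univ.sup' Finset.univ_nonempty g = max (g 0) (g 1) := by
  apply le_antisymm
  · exact Finset.sup'_le _ _ fun a _ => by fin_cases a <;> simp [le_max_left, le_max_right]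
  · exact max_le (Finset.le_sup' g (Finset.mem_univ 0)) (Finset.le_sup' g (Finset.mem_univ 1))

noncomputable def W₁ : Fin 3 → ℝ := ![1, 1, 0]
noncomputable def W₂ : Fin 3 → ℝ := ![0.91, 1, 0]

lemma opt1 : IsOptimalValue P₁ (fun r : Fin 2 => ((r : ℕ) : ℝ)) 0.9 W₁ := by
  intro s
  rw [sup2]
  fin_cases s <;>
    norm_num [Fin.sum_univ_three, Fin.sum_univ_two, P₁, W₁] <;> simp <;> norm_num

lemma opt2 : IsOptimalValue P₂ (fun r : Fin 2 => ((r : ℕ) : ℝ)) 0.9 W₂ := by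
  intro s
  rw [sup2]
  fin_cases s <;>
    norm_num [Fin.sum_univ_three, Fin.sum_univ_two, P₂, W₂] <;> simp <;> norm_num

/-- No function from complete state-only datasets to value functions recovers the
optimal value function of every finite MDP: there exist two finite MDPs (here on
states `Fin 3`, actions `Fin 2`, reward values `Fin 2` valued as `0` and `1`,
discount `0.9`) with identical complete state-only datasets but different optimal
value functions. -/
theorem no_function_recovers_optimal_values_from_state_only_data :
    (¬ ∃ f : (Fin 3 → Fin 3 → Fin 2 → Prop) → (Fin 3 → ℝ),
        ∀ p : Fin 3 → Fin 2 → Fin 3 → Fin 2 → ℝ, IsKernel p →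
          ∀ V : Fin 3 → ℝ, IsOptimalValue p (fun r => ((r : ℕ) : ℝ)) 0.9 V →
            f (Dataset p) = V) ∧
    ∃ (p₁ p₂ : Fin 3 → Fin 2 → Fin 3 → Fin 2 → ℝ) (V₁ V₂ : Fin 3 → ℝ),
      IsKernel p₁ ∧ IsKernel p₂ ∧ Dataset p₁ = Dataset p₂ ∧
      IsOptimalValue p₁ (fun r => ((r : ℕ) : ℝ)) 0.9 V₁ ∧
      IsOptimalValue p₂ (fun r => ((r : ℕ) : ℝ)) 0.9 V₂ ∧ V₁ ≠ V₂ := by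
  have hne : W₁ ≠ W₂ := by
    intro h
    have := congrFun h 0
    norm_num [W₁, W₂] at this
  constructor
  · rintro ⟨f, hf⟩
    have h1 := hf P₁ kernel1 W₁ opt1
    have h2 := hf P₂ kernel2 W₂ opt2
    rw [dataEq] at h1
    exact hne (h1 ▸ h2)
  · exact ⟨P₁, P₂, W₁, W₂, kernel1, kernel2, dataEq, opt1, opt2, hne⟩
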